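/- Let r ∈ ℕ, 1 < p < ∞, q = p/(p−1), β ≥ 0, 0 < γ < β + 1/p, and let ω be a function of modulus-of-continuity type. Then {∫_{π/(r(n+1))}^{π/r} (ω(t) t^γ / (t² |sin(rt/2)|^β))^q dt}^{1/q} = O((n+1)^{1−γ+β+1/p} ω(π/(n+1))), with a constant depending only on r, p, q, β, γ (not on n or ω beyond these). -/

import Mathlib

open Real

noncomputable section

set_option maxHeartbeats 800000

/-- `ω` is a function of modulus-of-continuity type on `[0, 2π]`. -/
def ModulusType (ω : ℝ → ℝ) : Prop :=
  ContinuousOn ω (Set.Icc 0 (2 * π)) ∧ MonotoneOn ω (Set.Icc 0 (2 * π)) ∧ ω 0 = 0 ∧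
    ∀ δ₁ δ₂ : ℝ, 0 ≤ δ₁ → δ₁ ≤ δ₂ → δ₁ + δ₂ ≤ 2 * π → ω (δ₁ + δ₂) ≤ ω δ₁ + ω δ₂

lemma modulus_nonneg {ω : ℝ → ℝ} (hω : ModulusType ω) {δ : ℝ} (h0 : 0 ≤ δ)
    (h2 : δ ≤ 2 * π) : 0 ≤ ω δ := by
  have := hω.2.1 (Set.mem_Icc.mpr ⟨le_refl 0, by positivity⟩) (Set.mem_Icc.mpr ⟨h0, h2⟩) h0
  rw [hω.2.2.1] at this
  exact this

lemma modulus_nsmul {ω : ℝ → ℝ} (hω : ModulusType ω) {δ : ℝ} (hδ : 0 ≤ δ) :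
    ∀ m : ℕ, (m : ℝ) * δ ≤ 2 * π → ω ((m : ℝ) * δ) ≤ m * ω δ := by
  intro m
  induction m with
  | zero => intro _; simp [hω.2.2.1]
  | succ k ih =>
    intro h
    rcases Nat.eq_zero_or_pos k with hk | hk
    · subst hk; simp
    · have hk1 : (1:ℝ) ≤ k := by exact_mod_cast hk
      have hkd : (k:ℝ) * δ ≤ 2 * π := by push_cast at h; nlinarith
      have h1 : δ ≤ (k:ℝ) * δ := le_mul_of_one_le_left hδ hk1
      have hsum : δ + (k:ℝ) * δ ≤ 2 * π := by push_cast at h; nlinarith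
      have := hω.2.2.2 δ ((k:ℝ)*δ) hδ h1 hsum
      have heq : ((k+1 : ℕ):ℝ) * δ = δ + (k:ℝ) * δ := by push_cast; ring
      rw [heq]
      calc ω (δ + (k:ℝ)*δ) ≤ ω δ + ω ((k:ℝ)*δ) := this
        _ ≤ ω δ + k * ω δ := by linarith [ih hkd]
        _ = ((k+1:ℕ):ℝ) * ω δ := by push_cast; ring

lemma modulus_bound {ω : ℝ → ℝ} (hω : ModulusType ω) {δ t : ℝ} (hδ0 : 0 < δ)
    (hδπ : δ ≤ π) (ht0 : 0 < t) (htπ : t ≤ π) : ω t ≤ (t / δ + 1) * ω δ := by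
  have hπ := Real.pi_pos
  set m := ⌈t / δ⌉₊ with hm
  have htd : 0 ≤ t / δ := by positivity
  have htm : t ≤ (m:ℝ) * δ := by
    rw [← div_le_iff₀ hδ0]; exact Nat.le_ceil _
  have hmlt : (m:ℝ) < t / δ + 1 := Nat.ceil_lt_add_one htd
  have hmd : (m:ℝ) * δ ≤ 2 * π := by
    have : (m:ℝ) * δ ≤ (t/δ + 1) * δ := by nlinarith
    have h2 : (t/δ+1)*δ = t + δ := by field_simp
    nlinarith
  have hωδ : 0 ≤ ω δ := modulus_nonneg hω hδ0.le (by linarith)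
  calc ω t ≤ ω ((m:ℝ) * δ) := by
        refine hω.2.1 (Set.mem_Icc.mpr ⟨ht0.le, by linarith⟩)
          (Set.mem_Icc.mpr ⟨by positivity, hmd⟩) htm
    _ ≤ m * ω δ := modulus_nsmul hω hδ0.le m hmd
    _ ≤ (t / δ + 1) * ω δ := by nlinarith

/-- The key integral estimate used in the proofs of Theorems 1–3, with a constant
depending only on `r, p, q, β, γ` and not on `n` or `ω`. -/
theorem key_integral_estimate (r : ℕ) (hr : 1 ≤ r) (p q β γ : ℝ) (hp : 1 < p)
    (hq : q = p / (p - 1)) (hβ : 0 ≤ β) (hγ0 : 0 < γ) (hγ : γ < β + 1 / p) :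
    ∃ C : ℝ, ∀ ω : ℝ → ℝ, ModulusType ω → ∀ n : ℕ,
      (∫ t in (π / (r * ((n : ℝ) + 1)))..(π / r),
          (ω t * t ^ γ / (t ^ 2 * |Real.sin (r * t / 2)| ^ β)) ^ q) ^ (1 / q)
        ≤ C * (((n : ℝ) + 1) ^ (1 - γ + β + 1 / p) * ω (π / ((n : ℝ) + 1))) := by
  have hπ := Real.pi_pos
  have hR : (1:ℝ) ≤ (r:ℝ) := by exact_mod_cast hr
  have hR0 : (0:ℝ) < (r:ℝ) := lt_of_lt_of_le one_pos hR
  have hp0 : (0:ℝ) < p := lt_trans one_pos hp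
  have hp1 : (0:ℝ) < p - 1 := by linarith
  have hq1 : 1 < q := by rw [hq, lt_div_iff₀ hp1]; linarith
  have hq0 : (0:ℝ) < q := lt_trans one_pos hq1
  have hpq : 1/q = 1 - 1/p := by rw [hq]; field_simp
  set e : ℝ := (γ - 1 - β) * q with he
  have he1 : e + 1 < 0 := by
    have h1 : γ - 1 - β < -(1/q) := by
      have h1p : 1/p + 1/q = 1 := by rw [hpq]; ring
      linarith
    have h2 : (γ - 1 - β) * q < (-(1/q)) * q := mul_lt_mul_of_pos_right h1 hq0
    have h3 : (-(1/q)) * q = -1 := by field_simp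
    rw [h3] at h2
    linarith
  set X : ℝ := (e + 1) / q with hX
  have hXval : -X = β - γ + 1/p := by
    have h1 : X = (γ - 1 - β) + 1/q := by
      rw [hX, he]; field_simp
    rw [h1, hpq]; ring
  set c1 : ℝ := 2 * r / π * (π / r) ^ β with hc1
  set c2 : ℝ := (π / r) ^ X with hc2
  set c3 : ℝ := ((-(e+1))⁻¹) ^ (1/q) with hc3
  have hc1p : 0 < c1 := by rw [hc1]; positivity
  have hc2p : 0 < c2 := by rw [hc2]; positivity
  have hc3p : 0 < c3 := by
    rw [hc3]
    apply Real.rpow_pos_of_pos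
    simp only [inv_pos]
    linarith
  refine ⟨c1 * c2 * c3, ?_⟩
  intro ω hω n
  obtain ⟨hcont, hmono, hzero, hsub⟩ := hω
  set δ : ℝ := π / ((n:ℝ) + 1) with hδ
  set a : ℝ := π / (r * ((n:ℝ) + 1)) with ha
  set b : ℝ := π / (r:ℝ) with hb
  have hn1 : (0:ℝ) < (n:ℝ) + 1 := by positivity
  have hn1' : (1:ℝ) ≤ (n:ℝ) + 1 := by simp
  have ha0 : 0 < a := by rw [ha]; positivity
  have hb0 : 0 < b := by rw [hb]; positivity
  have hab : a ≤ b := by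
    rw [ha, hb]
    exact div_le_div_of_nonneg_left hπ.le hR0 (le_mul_of_one_le_right hR0.le hn1')
  have hbπ : b ≤ π := by
    rw [hb, div_le_iff₀ hR0]
    exact le_mul_of_one_le_right hπ.le hR
  have hδ0 : 0 < δ := by rw [hδ]; positivity
  have hδπ : δ ≤ π := by
    rw [hδ, div_le_iff₀ hn1]
    exact le_mul_of_one_le_right hπ.le hn1'
  have hωδ : 0 ≤ ω δ := modulus_nonneg ⟨hcont, hmono, hzero, hsub⟩ hδ0.le (by linarith)
  set K : ℝ := c1 * (((n:ℝ) + 1) * ω δ) with hK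
  have hK0 : 0 ≤ K := by rw [hK]; positivity
  have hωt : ∀ t ∈ Set.Icc a b, 0 ≤ ω t := fun t ht =>
    modulus_nonneg ⟨hcont, hmono, hzero, hsub⟩ (le_trans ha0.le ht.1)
      (le_trans ht.2 (by linarith))
  -- sin bound
  have hsinpos : ∀ t ∈ Set.Icc a b, (r:ℝ) * t / π ≤ Real.sin ((r:ℝ) * t / 2) ∧
      0 < Real.sin ((r:ℝ) * t / 2) := by
    intro t ht
    have ht0 : 0 < t := lt_of_lt_of_le ha0 ht.1
    have h1 : (r:ℝ) * t / 2 ≤ π / 2 := by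
      have h1' : (r:ℝ) * t ≤ π := by
        have h := ht.2; rw [hb, le_div_iff₀ hR0] at h
        linarith [h]
      linarith
    have h2 : 0 ≤ (r:ℝ) * t / 2 := by positivity
    have h3 := Real.mul_le_sin h2 h1
    constructor
    · calc (r:ℝ) * t / π = 2 / π * ((r:ℝ) * t / 2) := by field_simp
        _ ≤ Real.sin ((r:ℝ) * t / 2) := h3
    · calc (0:ℝ) < 2 / π * ((r:ℝ) * t / 2) := by positivity
        _ ≤ _ := h3
  -- pointwise bound
  have hpt : ∀ t ∈ Set.Icc a b,
      ω t * t ^ γ / (t ^ 2 * |Real.sin ((r:ℝ) * t / 2)| ^ β) ≤ K * t ^ (γ - 1 - β) := by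
    intro t ht
    have ht0 : 0 < t := lt_of_lt_of_le ha0 ht.1
    have htπ : t ≤ π := le_trans ht.2 hbπ
    obtain ⟨hs1, hs2⟩ := hsinpos t ht
    have habs : |Real.sin ((r:ℝ) * t / 2)| = Real.sin ((r:ℝ) * t / 2) := abs_of_pos hs2
    -- numerator bound
    have hω1 : ω t ≤ (2 * r * ((n:ℝ)+1) / π * t) * ω δ := by
      have h1 := modulus_bound ⟨hcont, hmono, hzero, hsub⟩ hδ0 hδπ ht0 htπ
      have h2 : t / δ + 1 ≤ 2 * r * ((n:ℝ)+1) / π * t := by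
        set u : ℝ := t * ((n:ℝ)+1) / π with hu
        have hu0 : 0 < u := by rw [hu]; positivity
        have htδ : t / δ = u := by rw [hδ, hu]; field_simp
        have hta : π / ((r:ℝ) * ((n:ℝ)+1)) ≤ t := by rw [ha] at ht; exact ht.1
        have h3 : (1:ℝ) ≤ (r:ℝ) * u := by
          rw [div_le_iff₀ (by positivity : (0:ℝ) < (r:ℝ) * ((n:ℝ)+1))] at hta
          rw [hu]
          rw [show (r:ℝ) * (t * (((n:ℝ)+1)) / π) = t * ((r:ℝ) * ((n:ℝ)+1)) / π by ring]
          rw [le_div_iff₀ hπ, one_mul]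
          linarith
        have h4 : u ≤ (r:ℝ) * u := le_mul_of_one_le_left hu0.le hR
        have hrw : 2 * (r:ℝ) * ((n:ℝ)+1) / π * t = 2 * ((r:ℝ) * u) := by rw [hu]; ring
        rw [htδ, hrw]
        linarith
      calc ω t ≤ (t / δ + 1) * ω δ := h1
        _ ≤ (2 * r * ((n:ℝ)+1) / π * t) * ω δ := mul_le_mul_of_nonneg_right h2 hωδ
    -- denominator bound
    have hden1 : ((r:ℝ)/π * t) ^ β ≤ |Real.sin ((r:ℝ) * t / 2)| ^ β := by
      apply Real.rpow_le_rpow (by positivity) ?_ hβ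
      rw [habs]
      calc (r:ℝ)/π * t = (r:ℝ) * t / π := by ring
        _ ≤ _ := hs1
    have hd0 : (0:ℝ) < t ^ 2 * (((r:ℝ)/π * t) ^ β) := by positivity
    have hd1 : t ^ 2 * (((r:ℝ)/π * t) ^ β) ≤ t ^ 2 * |Real.sin ((r:ℝ) * t / 2)| ^ β :=
      mul_le_mul_of_nonneg_left hden1 (by positivity)
    have hnum1 : ω t * t ^ γ ≤ ((2 * r * ((n:ℝ)+1) / π * t) * ω δ) * t ^ γ :=
      mul_le_mul_of_nonneg_right hω1 (Real.rpow_nonneg ht0.le γ)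
    have step : ω t * t ^ γ / (t ^ 2 * |Real.sin ((r:ℝ) * t / 2)| ^ β)
        ≤ ((2 * r * ((n:ℝ)+1) / π * t) * ω δ) * t ^ γ / (t ^ 2 * (((r:ℝ)/π * t) ^ β)) :=
      div_le_div₀ (mul_nonneg (mul_nonneg (by positivity) hωδ) (Real.rpow_nonneg ht0.le γ))
        hnum1 hd0 hd1
    refine le_trans step (le_of_eq ?_)
    -- algebra
    have e1 : ((π:ℝ)/r) ^ β * ((r:ℝ)/π) ^ β = 1 := by
      rw [← Real.mul_rpow (by positivity) (by positivity)]
      rw [show (π/(r:ℝ)) * ((r:ℝ)/π) = 1 by field_simp]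
      exact Real.one_rpow β
    have e2 : t ^ (γ - 1 - β) * t ^ ((2:ℝ) + β) = t ^ (γ + 1) := by
      rw [← Real.rpow_add ht0]; ring_nf
    have e3 : t * t ^ γ = t ^ (γ + 1) := by
      rw [Real.rpow_add ht0, Real.rpow_one]; ring
    have e4 : ((r:ℝ)/π * t) ^ β = ((r:ℝ)/π) ^ β * t ^ β :=
      Real.mul_rpow (by positivity) ht0.le
    have e5 : (t:ℝ) ^ (2:ℕ) = t ^ ((2:ℝ)) := by
      rw [← Real.rpow_natCast t 2]; norm_num
    have e6 : t ^ ((2:ℝ)) * t ^ β = t ^ ((2:ℝ) + β) := (Real.rpow_add ht0 _ _).symm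
    rw [e4, e5]
    rw [show t ^ ((2:ℝ)) * (((r:ℝ)/π) ^ β * t ^ β) = ((r:ℝ)/π) ^ β * (t ^ ((2:ℝ)) * t ^ β) by
      ring, e6]
    rw [div_eq_iff (by positivity : ((r:ℝ)/π) ^ β * t ^ ((2:ℝ)+β) ≠ 0)]
    rw [hK, hc1]
    calc 2 * (r:ℝ) * ((n:ℝ)+1) / π * t * ω δ * t ^ γ
        = (2 * (r:ℝ) * ((n:ℝ)+1) / π * ω δ) * (t * t ^ γ) := by ring
      _ = (2 * (r:ℝ) * ((n:ℝ)+1) / π * ω δ) * t ^ (γ+1) := by rw [e3]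
      _ = (2 * (r:ℝ) * ((n:ℝ)+1) / π * ω δ) * (((π:ℝ)/r) ^ β * ((r:ℝ)/π) ^ β)
            * (t ^ (γ - 1 - β) * t ^ ((2:ℝ)+β)) := by rw [e1, e2]; ring
      _ = 2 * ↑r / π * (π / ↑r) ^ β * ((↑n + 1) * ω δ) * t ^ (γ - 1 - β)
            * (((r:ℝ)/π) ^ β * t ^ ((2:ℝ) + β)) := by ring
  -- integrability
  have hIccsub : Set.Icc a b ⊆ Set.Icc 0 (2*π) := Set.Icc_subset_Icc ha0.le (by linarith)
  have hcf : ContinuousOn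
      (fun t => (ω t * t ^ γ / (t ^ 2 * |Real.sin ((r:ℝ) * t / 2)| ^ β)) ^ q)
      (Set.Icc a b) := by
    apply ContinuousOn.rpow_const ?_ (fun t ht => Or.inr hq0.le)
    apply ContinuousOn.div
    · exact (hcont.mono hIccsub).mul (ContinuousOn.rpow_const continuousOn_id
        (fun t ht => Or.inl (ne_of_gt (lt_of_lt_of_le ha0 ht.1))))
    · apply ContinuousOn.mul
      · exact (continuous_pow 2).continuousOn
      · apply ContinuousOn.rpow_const ?_ (fun t ht => Or.inr hβ)
        exact ((Real.continuous_sin.comp (by continuity)).abs).continuousOn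
    · intro t ht
      obtain ⟨_, hs2⟩ := hsinpos t ht
      have ht0 : 0 < t := lt_of_lt_of_le ha0 ht.1
      exact ne_of_gt (mul_pos (pow_pos ht0 2)
        (Real.rpow_pos_of_pos (abs_pos.mpr hs2.ne') β))
  have hInt1 : IntervalIntegrable
      (fun t => (ω t * t ^ γ / (t ^ 2 * |Real.sin ((r:ℝ) * t / 2)| ^ β)) ^ q)
      MeasureTheory.volume a b := by
    apply ContinuousOn.intervalIntegrable
    rwa [Set.uIcc_of_le hab]
  have hInt2 : IntervalIntegrable (fun t => K ^ q * t ^ e) MeasureTheory.volume a b := by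
    apply ContinuousOn.intervalIntegrable
    rw [Set.uIcc_of_le hab]
    exact continuousOn_const.mul (ContinuousOn.rpow_const continuousOn_id
      (fun t ht => Or.inl (ne_of_gt (lt_of_lt_of_le ha0 ht.1))))
  -- pointwise bound on the q-th powers
  have hptq : ∀ t ∈ Set.Icc a b,
      (ω t * t ^ γ / (t ^ 2 * |Real.sin ((r:ℝ) * t / 2)| ^ β)) ^ q ≤ K ^ q * t ^ e := by
    intro t ht
    have ht0 : 0 < t := lt_of_lt_of_le ha0 ht.1
    have hf0 : 0 ≤ ω t * t ^ γ / (t ^ 2 * |Real.sin ((r:ℝ) * t / 2)| ^ β) :=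
      div_nonneg (mul_nonneg (hωt t ht) (Real.rpow_nonneg ht0.le γ)) (by positivity)
    calc (ω t * t ^ γ / (t ^ 2 * |Real.sin ((r:ℝ) * t / 2)| ^ β)) ^ q
        ≤ (K * t ^ (γ - 1 - β)) ^ q := Real.rpow_le_rpow hf0 (hpt t ht) hq0.le
      _ = K ^ q * (t ^ (γ - 1 - β)) ^ q :=
          Real.mul_rpow hK0 (Real.rpow_nonneg ht0.le _)
      _ = K ^ q * t ^ e := by rw [he, Real.rpow_mul ht0.le]
  have hmono_int := intervalIntegral.integral_mono_on hab hInt1 hInt2 hptq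
  have hne : e ≠ -1 := ne_of_lt (by linarith)
  have hzero_not : (0:ℝ) ∉ Set.uIcc a b := by
    rw [Set.uIcc_of_le hab]
    intro h
    exact absurd h.1 (not_le.mpr ha0)
  have heval : ∫ t in a..b, K ^ q * t ^ e = K ^ q * ((b ^ (e+1) - a ^ (e+1)) / (e+1)) := by
    rw [intervalIntegral.integral_const_mul, integral_rpow (Or.inr ⟨hne, hzero_not⟩)]
  have hep : 0 < -(e+1) := by linarith
  have hbound2 : (b ^ (e+1) - a ^ (e+1)) / (e+1) ≤ a ^ (e+1) / (-(e+1)) := by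
    have h1 : (b ^ (e+1) - a ^ (e+1)) / (e+1) = (a ^ (e+1) - b ^ (e+1)) / (-(e+1)) := by
      rw [div_neg, ← neg_div, neg_sub]
    rw [h1]
    exact div_le_div₀ (Real.rpow_nonneg ha0.le _)
      (by linarith [Real.rpow_nonneg hb0.le (e+1)]) hep le_rfl
  set B : ℝ := K ^ q * (a ^ (e+1) / (-(e+1))) with hB
  have hInt_le : (∫ t in a..b,
      (ω t * t ^ γ / (t ^ 2 * |Real.sin ((r:ℝ) * t / 2)| ^ β)) ^ q) ≤ B := by
    rw [hB]
    calc (∫ t in a..b, (ω t * t ^ γ / (t ^ 2 * |Real.sin ((r:ℝ) * t / 2)| ^ β)) ^ q)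
        ≤ ∫ t in a..b, K ^ q * t ^ e := hmono_int
      _ = K ^ q * ((b ^ (e+1) - a ^ (e+1)) / (e+1)) := heval
      _ ≤ K ^ q * (a ^ (e+1) / (-(e+1))) :=
          mul_le_mul_of_nonneg_left hbound2 (Real.rpow_nonneg hK0 q)
  have hIqnn : 0 ≤ ∫ t in a..b,
      (ω t * t ^ γ / (t ^ 2 * |Real.sin ((r:ℝ) * t / 2)| ^ β)) ^ q := by
    apply intervalIntegral.integral_nonneg hab
    intro t ht
    have ht0 : 0 < t := lt_of_lt_of_le ha0 ht.1
    exact Real.rpow_nonneg (div_nonneg (mul_nonneg (hωt t ht)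
      (Real.rpow_nonneg ht0.le γ)) (by positivity)) q
  have hfinal1 : (∫ t in a..b,
      (ω t * t ^ γ / (t ^ 2 * |Real.sin ((r:ℝ) * t / 2)| ^ β)) ^ q) ^ (1/q)
      ≤ B ^ (1/q) := Real.rpow_le_rpow hIqnn hInt_le (by positivity)
  have hRHS : B ^ (1/q) = K * (a ^ X * c3) := by
    rw [hB, div_eq_mul_inv]
    rw [Real.mul_rpow (Real.rpow_nonneg hK0 q)
      (mul_nonneg (Real.rpow_nonneg ha0.le _) (by positivity))]
    rw [Real.mul_rpow (Real.rpow_nonneg ha0.le _) (by positivity)]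
    congr 1
    · rw [← Real.rpow_mul hK0, mul_one_div, div_self hq0.ne', Real.rpow_one]
    · rw [← Real.rpow_mul ha0.le, mul_one_div, hc3, hX]
  have haX : a ^ X = c2 * ((n:ℝ)+1) ^ (β - γ + 1/p) := by
    rw [ha, div_mul_eq_div_div, div_eq_mul_inv (π / (r:ℝ))]
    rw [Real.mul_rpow (by positivity) (by positivity), Real.inv_rpow hn1.le,
      ← Real.rpow_neg hn1.le, hXval, hc2]
  have hfinal2 : K * (a ^ X * c3) =
      c1 * c2 * c3 * (((n:ℝ)+1) ^ (1 - γ + β + 1/p) * ω δ) := by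
    have hsplit : ((n:ℝ)+1) ^ ((1:ℝ) + (β - γ + 1/p)) =
        ((n:ℝ)+1) * ((n:ℝ)+1) ^ (β - γ + 1/p) := by
      rw [Real.rpow_add hn1, Real.rpow_one]
    rw [haX, hK, show (1:ℝ) - γ + β + 1/p = 1 + (β - γ + 1/p) by ring, hsplit]
    ring
  calc (∫ t in a..b,
      (ω t * t ^ γ / (t ^ 2 * |Real.sin ((r:ℝ) * t / 2)| ^ β)) ^ q) ^ (1/q)
      ≤ B ^ (1/q) := hfinal1
    _ = c1 * c2 * c3 * (((n:ℝ)+1) ^ (1 - γ + β + 1/p) * ω δ) := by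
        rw [hRHS, hfinal2]
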